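/- Let m ≥ 2, index coordinates by the integers {1, 2, ..., 2^m − 1}, and let b(s) ∈ F_2^m denote the binary representation of s. Define the binary Hamming code H = {x ∈ F_2^(2^m − 1) : Σ_{s=1}^{2^m − 1} x_s · b(s) = 0 in F_2^m}. For 1 ≤ j ≤ m − 1 and 1 ≤ i < 2^j, let g_{i,j} ∈ F_2^(2^m − 1) be the vector with exactly three ones, at positions i, 2^j, and i + 2^j. Then the 2^m − 1 − m vectors g_{i,j} are linearly independent and span H; in particular H admits a generator matrix in which every row has Hamming weight exactly 3. -/

import Mathlib

/-- `binRep m s` is the binary representation of the natural number `s`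
as a vector in `F₂^m`. -/
def binRep (m : ℕ) (s : ℕ) : Fin m → ZMod 2 :=
  fun i => if s.testBit i.1 then 1 else 0

/-- The binary Hamming code of length `2^m - 1`: coordinates are indexed by
`{1, ..., 2^m - 1}` (coordinate `s : Fin (2^m - 1)` stands for the integer `s+1`),
and a word `x` lies in the code iff `∑ s x_s · b(s) = 0` in `F₂^m`. -/
def hammingCode (m : ℕ) : Set (Fin (2 ^ m - 1) → ZMod 2) :=
  {x | ∑ s : Fin (2 ^ m - 1), x s • binRep m (s.1 + 1) = 0}

/-- The index set of the weight-3 generators: pairs `(i, j)` with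
`1 ≤ j ≤ m - 1` and `1 ≤ i < 2^j`. -/
def genIdx (m : ℕ) : Type :=
  {p : ℕ × ℕ // 1 ≤ p.2 ∧ p.2 ≤ m - 1 ∧ 1 ≤ p.1 ∧ p.1 < 2 ^ p.2}

/-- The generator `g_{i,j}`: the word with exactly three ones, at positions
`i`, `2^j` and `i + 2^j`. -/
def genVec (m : ℕ) (p : genIdx m) : Fin (2 ^ m - 1) → ZMod 2 :=
  fun s => if s.1 + 1 = p.1.1 ∨ s.1 + 1 = 2 ^ p.1.2 ∨ s.1 + 1 = p.1.1 + 2 ^ p.1.2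
    then 1 else 0




lemma binRep_add (m i j : ℕ) (hij : i < 2 ^ j) :
    binRep m (i + 2 ^ j) = binRep m i + binRep m (2 ^ j) := by
  funext r
  simp only [binRep, Pi.add_apply]
  rcases lt_trichotomy r.1 j with hr | hr | hr
  · rw [Nat.add_comm, Nat.testBit_two_pow_add_gt hr, Nat.testBit_two_pow]
    have : ¬ (j = r.1) := by omega
    simp [this]
  · have h1 : i.testBit r.1 = false := by
      apply Nat.testBit_lt_two_pow; rw [hr]; exact hij
    have h2 : (i + 2 ^ j).testBit r.1 = true := by
      rw [Nat.add_comm, hr, Nat.testBit_two_pow_add_eq]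
      rw [hr] at h1
      rw [h1]; rfl
    rw [h1, h2, Nat.testBit_two_pow]
    simp [hr]
  · have h0 : 2 ^ (j + 1) ≤ 2 ^ r.1 := Nat.pow_le_pow_right (by norm_num) (by omega)
    have h1 : i.testBit r.1 = false := by
      apply Nat.testBit_lt_two_pow
      calc i < 2 ^ j := hij
        _ ≤ 2 ^ r.1 := Nat.pow_le_pow_right (by norm_num) (by omega)
    have h2 : (i + 2 ^ j).testBit r.1 = false := by
      apply Nat.testBit_lt_two_pow
      calc i + 2 ^ j < 2 ^ j + 2 ^ j := by omega
        _ = 2 ^ (j + 1) := by ring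
        _ ≤ 2 ^ r.1 := h0
    rw [h1, h2, Nat.testBit_two_pow]
    have : ¬ (j = r.1) := by omega
    simp [this]



-- arithmetic facts
lemma two_pow_le_aux {m j : ℕ} (hm : 2 ≤ m) (hj : j ≤ m - 1) : 2 ^ j ≤ 2 ^ m - 1 := by
  have h1 : 2 ^ j ≤ 2 ^ (m - 1) := Nat.pow_le_pow_right (by norm_num) hj
  have h2 : 2 ^ (m - 1) * 2 = 2 ^ m := by
    rw [← pow_succ]; congr 1; omega
  have h3 : 1 ≤ 2 ^ (m - 1) := Nat.one_le_two_pow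
  omega

lemma piv_le {m i j : ℕ} (hm : 2 ≤ m) (hj : j ≤ m - 1) (hij : i < 2 ^ j) :
    i + 2 ^ j ≤ 2 ^ m - 1 := by
  have h1 : 2 ^ (j + 1) ≤ 2 ^ m := Nat.pow_le_pow_right (by norm_num) (by omega)
  have : i + 2 ^ j < 2 ^ j + 2 ^ j := by omega
  have h2 : 2 ^ j + 2 ^ j = 2 ^ (j + 1) := by ring
  omega

lemma not_pow {i j t : ℕ} (hi : 1 ≤ i) (hij : i < 2 ^ j) : i + 2 ^ j ≠ 2 ^ t := by
  intro h
  have h1 : 2 ^ j < 2 ^ t := by omega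
  have h2 : j < t := by
    by_contra hc
    have : (2:ℕ) ^ t ≤ 2 ^ j := Nat.pow_le_pow_right (by norm_num) (by omega)
    omega
  have h3 : 2 ^ (j + 1) ≤ 2 ^ t := Nat.pow_le_pow_right (by norm_num) (by omega)
  have h4 : 2 ^ j + 2 ^ j = 2 ^ (j + 1) := by ring
  omega

lemma piv_inj {i j i' j' : ℕ} (hi : 1 ≤ i) (hij : i < 2 ^ j)
    (hi' : 1 ≤ i') (hij' : i' < 2 ^ j') (h : i + 2 ^ j = i' + 2 ^ j') :
    i = i' ∧ j = j' := by
  have hjj : j = j' := by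
    rcases lt_trichotomy j j' with hl | hl | hl
    · exfalso
      have h3 : 2 ^ (j + 1) ≤ 2 ^ j' := Nat.pow_le_pow_right (by norm_num) (by omega)
      have h4 : 2 ^ j + 2 ^ j = 2 ^ (j + 1) := by ring
      omega
    · exact hl
    · exfalso
      have h3 : 2 ^ (j' + 1) ≤ 2 ^ j := Nat.pow_le_pow_right (by norm_num) (by omega)
      have h4 : 2 ^ j' + 2 ^ j' = 2 ^ (j' + 1) := by ring
      omega
  subst hjj
  exact ⟨by omega, rfl⟩


def chk (m : ℕ) : (Fin (2 ^ m - 1) → ZMod 2) →ₗ[ZMod 2] (Fin m → ZMod 2) where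
  toFun x := ∑ s : Fin (2 ^ m - 1), x s • binRep m (s.1 + 1)
  map_add' x y := by
    simp [add_smul, Finset.sum_add_distrib]
  map_smul' c x := by
    simp [Finset.smul_sum, smul_smul]

lemma hammingCode_eq_ker (m : ℕ) : hammingCode m = ↑(LinearMap.ker (chk m)) := by
  ext x
  simp [hammingCode, LinearMap.mem_ker, chk]

-- support description
lemma genVec_supp (m : ℕ) (hm : 2 ≤ m) (p : genIdx m) :
    ∃ a b c : Fin (2 ^ m - 1), a ≠ b ∧ a ≠ c ∧ b ≠ c ∧
      a.1 + 1 = p.1.1 ∧ b.1 + 1 = 2 ^ p.1.2 ∧ c.1 + 1 = p.1.1 + 2 ^ p.1.2 ∧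
      ∀ s, genVec m p s = if s = a ∨ s = b ∨ s = c then 1 else 0 := by
  obtain ⟨⟨i, j⟩, hj1, hj2, hi1, hi2⟩ := p
  simp only at hj1 hj2 hi1 hi2 ⊢
  have hpow : 2 ^ j ≤ 2 ^ m - 1 := two_pow_le_aux hm hj2
  have hpiv : i + 2 ^ j ≤ 2 ^ m - 1 := piv_le hm hj2 hi2
  refine ⟨⟨i - 1, by omega⟩, ⟨2 ^ j - 1, by omega⟩, ⟨i + 2 ^ j - 1, by omega⟩,
    ?_, ?_, ?_, by simp; omega, by simp; omega, by simp; omega, ?_⟩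
  · simp only [Ne, Fin.mk.injEq]; omega
  · simp only [Ne, Fin.mk.injEq]; omega
  · simp only [Ne, Fin.mk.injEq]; omega
  · intro s
    simp only [genVec, Fin.ext_iff]
    congr 1
    simp only [eq_iff_iff]
    omega

lemma genVec_norm (m : ℕ) (hm : 2 ≤ m) (p : genIdx m) : hammingNorm (genVec m p) = 3 := by
  obtain ⟨a, b, c, hab, hac, hbc, -, -, -, hval⟩ := genVec_supp m hm p
  have : (Finset.univ.filter fun s => genVec m p s ≠ 0) = {a, b, c} := by
    ext s
    simp only [Finset.mem_filter, Finset.mem_univ, true_and, hval s,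
      Finset.mem_insert, Finset.mem_singleton]
    constructor
    · intro h
      by_contra hc
      push_neg at hc
      simp [hc.1, hc.2.1, hc.2.2] at h
    · rintro (rfl | rfl | rfl) <;> simp [hab, hac, hbc]
  rw [hammingNorm, this]
  rw [Finset.card_insert_of_notMem (by simp [hab, hac]),
    Finset.card_insert_of_notMem (by simp [hbc]), Finset.card_singleton]

lemma chk_genVec (m : ℕ) (hm : 2 ≤ m) (p : genIdx m) : chk m (genVec m p) = 0 := by
  obtain ⟨a, b, c, hab, hac, hbc, ha, hb, hc, hval⟩ := genVec_supp m hm p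
  have hfun : genVec m p = fun s => if s ∈ ({a, b, c} : Finset _) then (1 : ZMod 2) else 0 := by
    funext s
    rw [hval s]
    simp [Finset.mem_insert]
  show (∑ s : Fin (2 ^ m - 1), genVec m p s • binRep m (s.1 + 1)) = 0
  rw [hfun]
  have : ∀ s : Fin (2 ^ m - 1),
      (if s ∈ ({a, b, c} : Finset _) then (1 : ZMod 2) else 0) • binRep m (s.1 + 1)
      = if s ∈ ({a, b, c} : Finset _) then binRep m (s.1 + 1) else 0 := by
    intro s
    split <;> simp
  simp only [this]
  rw [Finset.sum_ite_mem, Finset.univ_inter]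
  rw [Finset.sum_insert (by simp [hab, hac]), Finset.sum_insert (by simp [hbc]),
    Finset.sum_singleton, ha, hb, hc]
  rw [binRep_add m p.1.1 p.1.2 p.2.2.2.2]
  have h2 : ∀ v : Fin m → ZMod 2, v + v = 0 := by
    intro v; funext r
    have : ∀ x : ZMod 2, x + x = 0 := by decide
    simpa using this (v r)
  have := h2 (binRep m p.1.1 + binRep m (2 ^ p.1.2))
  linear_combination (norm := abel_nf) this

lemma sum_two_pow (n : ℕ) : ∑ i ∈ Finset.range n, 2 ^ i = 2 ^ n - 1 := by
  induction n with
  | zero => simp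
  | succ k ih =>
    rw [Finset.sum_range_succ, ih]
    have : 1 ≤ 2 ^ k := Nat.one_le_two_pow
    have : 2 ^ (k + 1) = 2 ^ k + 2 ^ k := by ring
    omega

def genFinset (m : ℕ) : Finset (ℕ × ℕ) :=
  (Finset.Icc 1 (m - 1)).biUnion fun j => (Finset.Ico 1 (2 ^ j)).image fun i => (i, j)

lemma mem_genFinset (m : ℕ) (p : ℕ × ℕ) :
    p ∈ genFinset m ↔ 1 ≤ p.2 ∧ p.2 ≤ m - 1 ∧ 1 ≤ p.1 ∧ p.1 < 2 ^ p.2 := by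
  simp only [genFinset, Finset.mem_biUnion, Finset.mem_Icc, Finset.mem_image,
    Finset.mem_Ico]
  constructor
  · rintro ⟨j, ⟨hj1, hj2⟩, i, ⟨hi1, hi2⟩, rfl⟩
    exact ⟨hj1, hj2, hi1, hi2⟩
  · rintro ⟨hj1, hj2, hi1, hi2⟩
    exact ⟨p.2, ⟨hj1, hj2⟩, p.1, ⟨hi1, hi2⟩, rfl⟩

lemma genFinset_card (m : ℕ) (hm : 2 ≤ m) : (genFinset m).card = 2 ^ m - 1 - m := by
  rw [genFinset, Finset.card_biUnion]
  · have h1 : ∀ j ∈ Finset.Icc 1 (m - 1),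
        ((Finset.Ico 1 (2 ^ j)).image fun i => (i, j)).card = 2 ^ j - 1 := by
      intro j _
      rw [Finset.card_image_of_injective _ (fun a b h => (Prod.mk.injEq _ _ _ _).mp h |>.1),
        Nat.card_Ico]
    rw [Finset.sum_congr rfl h1]
    have h2 : ∑ j ∈ Finset.Icc 1 (m - 1), (2 ^ j - 1) + ∑ j ∈ Finset.Icc 1 (m - 1), 1
        = ∑ j ∈ Finset.Icc 1 (m - 1), 2 ^ j := by
      rw [← Finset.sum_add_distrib]
      apply Finset.sum_congr rfl
      intro j _
      have : 1 ≤ 2 ^ j := Nat.one_le_two_pow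
      omega
    have h3 : ∑ j ∈ Finset.Icc 1 (m - 1), 2 ^ j = 2 ^ m - 2 := by
      have : Finset.Icc 1 (m - 1) = Finset.Ico 1 m := by
        ext j; simp [Finset.mem_Icc, Finset.mem_Ico]; omega
      rw [this]
      have h4 : ∑ j ∈ Finset.Ico 0 1, 2 ^ j + ∑ j ∈ Finset.Ico 1 m, 2 ^ j
          = ∑ j ∈ Finset.Ico 0 m, 2 ^ j :=
        Finset.sum_Ico_consecutive _ (by omega) (by omega)
      have h5 : ∑ j ∈ Finset.Ico 0 m, 2 ^ j = 2 ^ m - 1 := by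
        rw [← Finset.range_eq_Ico]; exact sum_two_pow m
      have h6 : ∑ j ∈ Finset.Ico 0 1, 2 ^ j = 1 := by simp
      have : 2 ≤ 2 ^ m := by
        calc 2 = 2 ^ 1 := by norm_num
        _ ≤ 2 ^ m := Nat.pow_le_pow_right (by norm_num) (by omega)
      omega
    have h7 : ∑ j ∈ Finset.Icc 1 (m - 1), 1 = m - 1 := by
      simp [Nat.card_Icc]
    have : 2 ≤ 2 ^ m := by
      calc 2 = 2 ^ 1 := by norm_num
      _ ≤ 2 ^ m := Nat.pow_le_pow_right (by norm_num) (by omega)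
    omega
  · intro x _ y _ hxy
    simp only [Finset.disjoint_left, Finset.mem_image, Finset.mem_Ico]
    rintro a ⟨i, _, rfl⟩ ⟨i', _, h⟩
    exact hxy ((Prod.mk.injEq _ _ _ _).mp h.symm |>.2)

noncomputable instance genIdxFintype (m : ℕ) : Fintype (genIdx m) :=
  Fintype.ofFinset (genFinset m) (fun p => by rw [mem_genFinset]; rfl)

lemma genIdx_card (m : ℕ) (hm : 2 ≤ m) : Fintype.card (genIdx m) = 2 ^ m - 1 - m := by
  rw [← genFinset_card m hm]
  exact Fintype.card_ofFinset _ _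

instance genIdxDecEq (m : ℕ) : DecidableEq (genIdx m) :=
  show DecidableEq {p : ℕ × ℕ // 1 ≤ p.2 ∧ p.2 ≤ m - 1 ∧ 1 ≤ p.1 ∧ p.1 < 2 ^ p.2} from
    inferInstance

lemma genVec_li (m : ℕ) (hm : 2 ≤ m) : LinearIndependent (ZMod 2) (genVec m) := by
  rw [linearIndependent_iff']
  suffices H : ∀ s : Finset (genIdx m), ∀ g : genIdx m → ZMod 2,
      (∑ q ∈ s, g q • genVec m q) = 0 → ∀ q ∈ s, g q = 0 by
    intro s g h i hi; exact H s g h i hi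
  intro s
  induction s using Finset.strongInduction with
  | _ s ih =>
    intro g hsum q hq
    have hs : s.Nonempty := ⟨q, hq⟩
    obtain ⟨p, hps, hpmax⟩ := Finset.exists_max_image s (fun r => r.1.1 + 2 ^ r.1.2) hs
    -- the pivot coordinate of p
    have hple : p.1.1 + 2 ^ p.1.2 ≤ 2 ^ m - 1 := piv_le hm p.2.2.1 p.2.2.2.2
    have h2m : 1 ≤ 2 ^ m := Nat.one_le_two_pow
    have h2j : 1 ≤ 2 ^ p.1.2 := Nat.one_le_two_pow
    have hp1 : 1 ≤ p.1.1 := p.2.2.2.1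
    have hmem : p.1.1 + 2 ^ p.1.2 - 1 < 2 ^ m - 1 := by omega
    set cp : Fin (2 ^ m - 1) := ⟨p.1.1 + 2 ^ p.1.2 - 1, hmem⟩ with hcp
    have hcoord : cp.1 + 1 = p.1.1 + 2 ^ p.1.2 := by
      simp only [hcp]; omega
    have hval : ∀ r ∈ s, genVec m r cp = if r = p then 1 else 0 := by
      intro r hr
      by_cases hrp : r = p
      · subst hrp
        simp [genVec, hcoord]
      · rw [if_neg hrp]
        have hler : r.1.1 + 2 ^ r.1.2 ≤ p.1.1 + 2 ^ p.1.2 := hpmax r hr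
        simp only [genVec, hcoord]
        rw [if_neg]
        rintro (h | h | h)
        · -- p.1.1 + 2 ^ p.1.2 = r.1.1, but r.1.1 < r.1.1 + 2^r.1.2 ≤ p.1.1 + 2^p.1.2
          have : 1 ≤ 2 ^ r.1.2 := Nat.one_le_two_pow
          omega
        · exact not_pow hp1 p.2.2.2.2 h
        · obtain ⟨h1, h2⟩ := piv_inj hp1 p.2.2.2.2 r.2.2.2.1 r.2.2.2.2 h
          exact hrp (Subtype.ext (Prod.ext h1.symm h2.symm))
    have hgp : g p = 0 := by
      have h0 := congrFun hsum cp
      rw [Finset.sum_apply] at h0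
      simp only [Pi.smul_apply, smul_eq_mul] at h0
      rw [Finset.sum_congr rfl (fun r hr => by rw [hval r hr])] at h0
      simpa [hps] using h0
    have hsum' : (∑ r ∈ s.erase p, g r • genVec m r) = 0 := by
      have h1 := Finset.sum_erase_add s (fun r => g r • genVec m r) hps
      simp only [hgp, zero_smul, add_zero] at h1
      rw [h1]; exact hsum
    by_cases hqp : q = p
    · rw [hqp]; exact hgp
    · exact ih (s.erase p) (Finset.erase_ssubset hps) g hsum' q (Finset.mem_erase.mpr ⟨hqp, hq⟩)

lemma chk_surj (m : ℕ) (hm : 2 ≤ m) : LinearMap.range (chk m) = ⊤ := by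
  rw [← top_le_iff, ← (Pi.basisFun (ZMod 2) (Fin m)).span_eq, Submodule.span_le]
  rintro _ ⟨t, rfl⟩
  have h2m : 1 ≤ 2 ^ m := Nat.one_le_two_pow
  have hlt : 2 ^ t.1 - 1 < 2 ^ m - 1 := by
    have h1 : 2 ^ (t.1 + 1) ≤ 2 ^ m := Nat.pow_le_pow_right (by norm_num) (by omega)
    have h2 : 2 ^ t.1 + 2 ^ t.1 = 2 ^ (t.1 + 1) := by ring
    have h3 : 1 ≤ 2 ^ t.1 := Nat.one_le_two_pow
    omega
  set a : Fin (2 ^ m - 1) := ⟨2 ^ t.1 - 1, hlt⟩ with ha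
  refine ⟨Pi.single a 1, ?_⟩
  have hdef : ∀ x : Fin (2 ^ m - 1) → ZMod 2,
      chk m x = ∑ s : Fin (2 ^ m - 1), x s • binRep m (s.1 + 1) := fun x => rfl
  rw [hdef]
  rw [Finset.sum_eq_single a]
  · have h3 : 1 ≤ 2 ^ t.1 := Nat.one_le_two_pow
    have haa : a.1 + 1 = 2 ^ t.1 := by simp only [ha]; omega
    rw [Pi.single_eq_same, one_smul, haa, Pi.basisFun_apply]
    funext r
    simp only [binRep, Nat.testBit_two_pow]
    rcases eq_or_ne r t with rfl | hrt
    · simp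
    · have : t.1 ≠ r.1 := fun h => hrt (Fin.ext h).symm
      simp [this, Pi.single_eq_of_ne hrt]
  · intro b _ hb
    rw [Pi.single_eq_of_ne hb, zero_smul]
  · intro h
    exact absurd (Finset.mem_univ a) h

lemma span_eq_code (m : ℕ) (hm : 2 ≤ m) :
    Submodule.span (ZMod 2) (Set.range (genVec m)) = LinearMap.ker (chk m) := by
  have hle : Submodule.span (ZMod 2) (Set.range (genVec m)) ≤ LinearMap.ker (chk m) := by
    rw [Submodule.span_le]
    rintro _ ⟨p, rfl⟩
    exact LinearMap.mem_ker.mpr (chk_genVec m hm p)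
  have h2m : 1 ≤ 2 ^ m := Nat.one_le_two_pow
  have hmle : m ≤ 2 ^ m - 1 := by
    have := @Nat.lt_two_pow_self m
    omega
  have hrk : Module.finrank (ZMod 2) (LinearMap.ker (chk m)) = 2 ^ m - 1 - m := by
    have h1 := LinearMap.finrank_range_add_finrank_ker (chk m)
    rw [chk_surj m hm, finrank_top] at h1
    have h2 : Module.finrank (ZMod 2) (Fin m → ZMod 2) = m := by
      simp [Module.finrank_fintype_fun_eq_card]
    have h3 : Module.finrank (ZMod 2) (Fin (2 ^ m - 1) → ZMod 2) = 2 ^ m - 1 := by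
      simp [Module.finrank_fintype_fun_eq_card]
    omega
  have hrk2 : Module.finrank (ZMod 2)
      (Submodule.span (ZMod 2) (Set.range (genVec m))) = 2 ^ m - 1 - m := by
    rw [finrank_span_eq_card (genVec_li m hm)]
    exact genIdx_card m hm
  exact Submodule.eq_of_le_of_finrank_le hle (by omega)

/-- For `m ≥ 2`, the `2^m - 1 - m` vectors `g_{i,j}`
(for `1 ≤ j ≤ m-1`, `1 ≤ i < 2^j`) are linearly independent and span the binary
Hamming code of length `2^m - 1`; moreover each of them has Hamming weight exactly 3,
so the Hamming code admits a generator matrix all of whose rows have weight 3. -/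
theorem stmt_8 (m : ℕ) (hm : 2 ≤ m) :
    Nat.card (genIdx m) = 2 ^ m - 1 - m ∧
    LinearIndependent (ZMod 2) (genVec m) ∧
    (Submodule.span (ZMod 2) (Set.range (genVec m)) : Set (Fin (2 ^ m - 1) → ZMod 2))
      = hammingCode m ∧
    (∀ p : genIdx m, hammingNorm (genVec m p) = 3) := by
  refine ⟨?_, genVec_li m hm, ?_, genVec_norm m hm⟩
  · rw [Nat.card_eq_fintype_card]
    exact genIdx_card m hm
  · rw [span_eq_code m hm, hammingCode_eq_ker]
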